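/- Let G be the group of n-tuples in {1,...,n-1}^n under componentwise addition modulo n-1, and H the cyclic subgroup generated by (1,...,1). Then every coset of H in G contains exactly one prime parking function of length n. -/

import Mathlib

/-- A parking function of length `n`. -/
def IsParkingFunction (n : ℕ) (π : Fin n → ℕ) : Prop :=
  (∀ i, 1 ≤ π i) ∧ ∃ σ : Equiv.Perm (Fin n),
    Monotone (π ∘ σ) ∧ ∀ i : Fin n, π (σ i) ≤ (i : ℕ) + 1

/-- A prime parking function of length `n`. -/
def IsPrimeParkingFunction (n : ℕ) (π : Fin n → ℕ) : Prop :=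
  IsParkingFunction n π ∧ ∀ j : ℕ, 1 ≤ j → j ≤ n - 1 →
    j + 1 ≤ (Finset.univ.filter (fun i : Fin n => π i ≤ j)).card

/-- Interpret an element of `ZMod (n-1)` as a preference in `{1, …, n-1}`
(the residue `0` corresponds to `n-1`). -/
def prefOfZMod (n : ℕ) (a : ZMod (n - 1)) : ℕ :=
  if a.val = 0 then n - 1 else a.val

namespace KalikowAux

open Finset

lemma cast_val_eq {M : ℕ} [NeZero M] (a : ZMod M) : ((a.val : ℕ) : ZMod M) = a := by
  rw [ZMod.natCast_val, ZMod.cast_id]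

/-- `(#{i : h i = s}) - 1` as an integer. -/
def Dfun (m : ℕ) (h : Fin (m + 2) → ZMod (m + 1)) (s : ZMod (m + 1)) : ℤ :=
  ((Finset.univ.filter (fun i => h i = s)).card : ℤ) - 1

/-- Partial sums of `Dfun` along the residues `0, 1, 2, …`. -/
def Pfun (m : ℕ) (h : Fin (m + 2) → ZMod (m + 1)) (x : ℕ) : ℤ :=
  ∑ s ∈ Finset.range x, Dfun m h ((s : ZMod (m + 1)))

variable {m : ℕ}

lemma sum_D (h : Fin (m + 2) → ZMod (m + 1)) :
    ∑ s : ZMod (m + 1), Dfun m h s = 1 := by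
  have hcard : (Finset.univ : Finset (Fin (m + 2))).card
      = ∑ s : ZMod (m + 1), ((Finset.univ.filter (fun i => h i = s)).card) :=
    Finset.card_eq_sum_card_fiberwise (fun x _ => mem_univ _)
  have h2 : ∑ s : ZMod (m + 1), ((Finset.univ.filter (fun i => h i = s)).card : ℤ)
      = (m + 2 : ℤ) := by
    rw [← Nat.cast_sum, ← hcard]; simp
  have h3 : ∑ s : ZMod (m + 1), (1 : ℤ) = (m + 1 : ℤ) := by
    simp [ZMod.card]
  calc ∑ s : ZMod (m + 1), Dfun m h s
      = (∑ s : ZMod (m + 1), ((Finset.univ.filter (fun i => h i = s)).card : ℤ))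
        - ∑ s : ZMod (m + 1), (1 : ℤ) := by
        rw [← Finset.sum_sub_distrib]; rfl
    _ = 1 := by rw [h2, h3]; ring

lemma sum_D_window (h : Fin (m + 2) → ZMod (m + 1)) (x : ℕ) :
    ∑ u ∈ Finset.range (m + 1), Dfun m h (((x + u : ℕ) : ZMod (m + 1))) = 1 := by
  have hbij : Function.Bijective (fun u : Fin (m + 1) => ((x + (u : ℕ) : ℕ) : ZMod (m + 1))) := by
    rw [Fintype.bijective_iff_injective_and_card]
    constructor
    · intro u v huv
      simp only [Nat.cast_add] at huv
      have h2 : ((u : ℕ) : ZMod (m + 1)) = ((v : ℕ) : ZMod (m + 1)) := by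
        exact add_left_cancel huv
      have := congrArg ZMod.val h2
      rwa [ZMod.val_cast_of_lt u.isLt, ZMod.val_cast_of_lt v.isLt, ← Fin.ext_iff] at this
    · simp [ZMod.card]
  calc ∑ u ∈ Finset.range (m + 1), Dfun m h (((x + u : ℕ) : ZMod (m + 1)))
      = ∑ u : Fin (m + 1), Dfun m h (((x + (u : ℕ) : ℕ) : ZMod (m + 1))) :=
        (Fin.sum_univ_eq_sum_range _ _).symm
    _ = ∑ s : ZMod (m + 1), Dfun m h s := Fintype.sum_bijective _ hbij _ _ (fun u => rfl)
    _ = 1 := sum_D h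

lemma Pfun_add_period (h : Fin (m + 2) → ZMod (m + 1)) (x : ℕ) :
    Pfun m h (x + (m + 1)) = Pfun m h x + 1 := by
  unfold Pfun
  rw [Finset.sum_range_add]
  congr 1
  exact sum_D_window h x

lemma Pfun_window (h : Fin (m + 2) → ZMod (m + 1)) (x t : ℕ) :
    Pfun m h (x + t) = Pfun m h x + ∑ u ∈ Finset.range t, Dfun m h (((x + u : ℕ) : ZMod (m + 1))) := by
  unfold Pfun
  rw [Finset.sum_range_add]

/-- `x` is a good starting point: every partial sum over a window of length `1..m+1`
starting at `x` is positive. -/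
def GoodAt (m : ℕ) (h : Fin (m + 2) → ZMod (m + 1)) (x : ℕ) : Prop :=
  ∀ u : ℕ, 1 ≤ u → u ≤ m + 1 → Pfun m h x < Pfun m h (x + u)

lemma exists_goodAt (h : Fin (m + 2) → ZMod (m + 1)) :
    ∃ x, x ≤ m ∧ GoodAt m h x := by
  have hne : ((Finset.range (m + 1)).image (Pfun m h)).Nonempty := by
    refine ⟨Pfun m h 0, Finset.mem_image_of_mem _ ?_⟩
    simp
  set v := ((Finset.range (m + 1)).image (Pfun m h)).min' hne with hv
  have hvmin : ∀ y ∈ Finset.range (m + 1), v ≤ Pfun m h y := fun y hy =>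
    Finset.min'_le _ _ (Finset.mem_image_of_mem _ hy)
  set T := (Finset.range (m + 1)).filter (fun x => Pfun m h x = v) with hT
  have hTne : T.Nonempty := by
    obtain ⟨x, hx, hxv⟩ := Finset.mem_image.1 (Finset.min'_mem _ hne)
    exact ⟨x, by rw [hT, Finset.mem_filter]; exact ⟨hx, hxv⟩⟩
  set x₀ := T.max' hTne with hx₀
  have hx₀T : x₀ ∈ T := T.max'_mem hTne
  rw [hT, Finset.mem_filter, Finset.mem_range] at hx₀T
  obtain ⟨hx₀lt, hx₀v⟩ := hx₀T
  refine ⟨x₀, by omega, ?_⟩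
  intro u hu1 hu2
  by_cases hcase : x₀ + u < m + 1
  · have hle : v ≤ Pfun m h (x₀ + u) := hvmin _ (Finset.mem_range.2 hcase)
    rcases lt_or_eq_of_le hle with hlt | heq
    · omega
    · exfalso
      have hmem : x₀ + u ∈ T := by
        rw [hT, Finset.mem_filter, Finset.mem_range]
        exact ⟨hcase, heq.symm⟩
      have := Finset.le_max' T _ hmem
      omega
  · have hw : x₀ + u = (x₀ + u - (m + 1)) + (m + 1) := by omega
    rw [hw, Pfun_add_period]
    have hwm : x₀ + u - (m + 1) ∈ Finset.range (m + 1) := by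
      rw [Finset.mem_range]; omega
    have := hvmin _ hwm
    omega

lemma goodAt_lt_false (h : Fin (m + 2) → ZMod (m + 1)) {x y : ℕ}
    (hx : x ≤ m) (hy : y ≤ m) (hgx : GoodAt m h x) (hgy : GoodAt m h y)
    (hlt : x < y) : False := by
  have h1 : Pfun m h x < Pfun m h y := by
    have := hgx (y - x) (by omega) (by omega)
    rwa [show x + (y - x) = y from by omega] at this
  have h2 : Pfun m h y < Pfun m h x + 1 := by
    have := hgy (x + (m + 1) - y) (by omega) (by omega)
    rwa [show y + (x + (m + 1) - y) = x + (m + 1) from by omega, Pfun_add_period] at this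
  omega

lemma goodAt_unique (h : Fin (m + 2) → ZMod (m + 1)) {x y : ℕ}
    (hx : x ≤ m) (hy : y ≤ m) (hgx : GoodAt m h x) (hgy : GoodAt m h y) : x = y := by
  rcases lt_trichotomy x y with hlt | heq | hgt
  · exact absurd (goodAt_lt_false h hx hy hgx hgy hlt) (by simp)
  · exact heq
  · exact absurd (goodAt_lt_false h hy hx hgy hgx hgt) (by simp)

/-- The key counting identity. -/
lemma card_filter_val_le (h : Fin (m + 2) → ZMod (m + 1)) (k : ZMod (m + 1))
    {t : ℕ} (ht : t ≤ m) :
    ((Finset.univ.filter (fun i => (h i + k).val ≤ t)).card : ℤ)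
      = (t + 1 : ℤ) + Pfun m h ((-k).val + (t + 1)) - Pfun m h ((-k).val) := by
  classical
  set x := (-k).val with hxdef
  have hxcast : ((x : ℕ) : ZMod (m + 1)) = -k := cast_val_eq (-k)
  have step1 : (Finset.univ.filter (fun i => (h i + k).val ≤ t)).card
      = ∑ b ∈ Finset.range (t + 1),
          (Finset.univ.filter (fun i => h i = (((x + b : ℕ) : ZMod (m + 1))))).card := by
    have := Finset.card_eq_sum_card_fiberwise
      (f := fun i : Fin (m + 2) => (h i + k).val)
      (s := Finset.univ.filter (fun i => (h i + k).val ≤ t))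
      (t := Finset.range (t + 1))
      (fun i hi => by
        simp only [Finset.mem_coe, Finset.mem_filter, Finset.mem_univ, true_and] at hi
        simp only [Finset.mem_coe, Finset.mem_range]; omega)
    rw [this]
    apply Finset.sum_congr rfl
    intro b hb
    rw [Finset.mem_range] at hb
    rw [Finset.filter_filter]
    congr 1
    apply Finset.filter_congr
    intro i _
    constructor
    · rintro ⟨hle, hval⟩
      have : h i + k = ((b : ℕ) : ZMod (m + 1)) := by
        rw [← hval]; exact (cast_val_eq _).symm
      have : h i = ((x : ℕ) : ZMod (m + 1)) + ((b : ℕ) : ZMod (m + 1)) := by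
        rw [hxcast]
        linear_combination this
      rw [this]; push_cast; ring
    · intro hval
      have hik : h i + k = ((b : ℕ) : ZMod (m + 1)) := by
        have : ((x + b : ℕ) : ZMod (m + 1)) = -k + ((b : ℕ) : ZMod (m + 1)) := by
          push_cast [hxcast]; ring
        rw [this] at hval
        linear_combination hval
      have : (h i + k).val = b := by
        rw [hik, ZMod.val_cast_of_lt (by omega)]
      omega
  have step2 : Pfun m h (x + (t + 1)) - Pfun m h x
      = ∑ b ∈ Finset.range (t + 1), Dfun m h (((x + b : ℕ) : ZMod (m + 1))) := by
    rw [Pfun_window]; ring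
  rw [step1, Nat.cast_sum]
  have hDb : ∀ b ∈ Finset.range (t + 1),
      ((Finset.univ.filter (fun i => h i = (((x + b : ℕ) : ZMod (m + 1))))).card : ℤ)
        = Dfun m h (((x + b : ℕ) : ZMod (m + 1))) + 1 := by
    intro b _
    unfold Dfun; ring
  rw [Finset.sum_congr rfl hDb, Finset.sum_add_distrib, ← step2]
  simp only [Finset.sum_const, Finset.card_range, nsmul_eq_mul, mul_one]
  push_cast
  ring

end KalikowAux

open KalikowAux Finset in
lemma isParkingFunction_of_counting (n : ℕ) (π : Fin n → ℕ)
    (h1 : ∀ i, 1 ≤ π i) (h2 : ∀ i, π i ≤ n - 1)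
    (hc : ∀ j : ℕ, 1 ≤ j → j ≤ n - 1 →
      j + 1 ≤ (Finset.univ.filter (fun i : Fin n => π i ≤ j)).card) :
    IsParkingFunction n π := by
  classical
  refine ⟨h1, Tuple.sort π, Tuple.monotone_sort π, ?_⟩
  intro i
  by_contra hlt
  push_neg at hlt
  have hbound := h2 (Tuple.sort π i)
  have hin : (i : ℕ) + 1 ≤ n - 1 := by omega
  have hcnt := hc ((i : ℕ) + 1) (by omega) hin
  -- transfer the count through the sorting permutation
  have hmap : (Finset.univ.filter (fun i' : Fin n => π (Tuple.sort π i') ≤ (i : ℕ) + 1))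
      = (Finset.univ.filter (fun i' : Fin n => π i' ≤ (i : ℕ) + 1)).map
          ((Tuple.sort π).symm.toEmbedding) := by
    ext x
    rw [Finset.mem_map_equiv]
    simp
  have hcard : (Finset.univ.filter (fun i' : Fin n => π i' ≤ (i : ℕ) + 1)).card
      = (Finset.univ.filter (fun i' : Fin n => π (Tuple.sort π i') ≤ (i : ℕ) + 1)).card := by
    rw [hmap, Finset.card_map]
  have hsub : (Finset.univ.filter (fun i' : Fin n => π (Tuple.sort π i') ≤ (i : ℕ) + 1))
      ⊆ Finset.univ.filter (fun i' : Fin n => i' < i) := by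
    intro x hx
    rw [Finset.mem_filter] at hx ⊢
    refine ⟨Finset.mem_univ _, ?_⟩
    by_contra hge
    push_neg at hge
    have hmono : π (Tuple.sort π i) ≤ π (Tuple.sort π x) := Tuple.monotone_sort π hge
    omega
  have hIio : (Finset.univ.filter (fun i' : Fin n => i' < i)) = Finset.Iio i := by
    ext; simp
  have hle := Finset.card_le_card hsub
  rw [hIio, Fin.card_Iio] at hle  -- might not exist; fix later
  omega

/-- Kalikow's circular symmetry: in the group `G = (ZMod (n-1))^n` under componentwise
addition, with `H` the cyclic subgroup generated by `(1,…,1)`, every coset of `H`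
contains exactly one prime parking function of length `n`. -/
theorem kalikow_coset_unique_primeParkingFunction (n : ℕ) (hn : 2 ≤ n)
    (g : Fin n → ZMod (n - 1)) :
    ∃! c : Fin n → ZMod (n - 1),
      c - g ∈ AddSubgroup.zmultiples (fun _ => (1 : ZMod (n - 1))) ∧
      IsPrimeParkingFunction n (fun i => prefOfZMod n (c i)) := by
  classical
  obtain ⟨m, rfl⟩ : ∃ m, n = m + 2 := ⟨n - 2, by omega⟩
  clear hn
  revert g
  show ∀ g : Fin (m + 2) → ZMod (m + 1),
    ∃! c : Fin (m + 2) → ZMod (m + 1),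
      c - g ∈ AddSubgroup.zmultiples (fun _ => (1 : ZMod (m + 1))) ∧
      IsPrimeParkingFunction (m + 2) (fun i => prefOfZMod (m + 2) (c i))
  intro g
  -- normalize the modulus
  set h : Fin (m + 2) → ZMod (m + 1) := fun i => g i - 1 with hh
  -- prefOfZMod in terms of val
  have pref_eq : ∀ a : ZMod (m + 1), prefOfZMod (m + 2) a = (a - 1).val + 1 := by
    intro a
    unfold prefOfZMod
    by_cases h0 : a.val = 0
    · rw [if_pos h0]
      have ha : a = 0 := by
        have := KalikowAux.cast_val_eq a
        rw [h0] at this; simpa using this.symm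
      rw [ha]
      have h1 : ((0 : ZMod (m + 1)) - 1) = -1 := by ring
      rw [h1, ZMod.val_neg_one]
      omega
    · rw [if_neg h0]
      have hval : a.val < m + 1 := ZMod.val_lt a
      have ha1 : a - 1 = ((a.val - 1 : ℕ) : ZMod (m + 1)) := by
        rw [Nat.cast_sub (by omega : 1 ≤ a.val), Nat.cast_one, KalikowAux.cast_val_eq]
      rw [ha1, ZMod.val_cast_of_lt (by omega)]
      omega
  -- the key counting fact
  have cardfact : ∀ (k : ZMod (m + 1)) (j : ℕ), 1 ≤ j → j ≤ m + 1 →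
      ((Finset.univ.filter (fun i : Fin (m + 2) =>
          prefOfZMod (m + 2) (g i + k) ≤ j)).card : ℤ)
        = (j : ℤ) + KalikowAux.Pfun m h ((-k).val + j) - KalikowAux.Pfun m h ((-k).val) := by
    intro k j hj1 hj2
    have hfilter : (Finset.univ.filter (fun i : Fin (m + 2) =>
        prefOfZMod (m + 2) (g i + k) ≤ j))
        = Finset.univ.filter (fun i : Fin (m + 2) => (h i + k).val ≤ j - 1) := by
      apply Finset.filter_congr
      intro i _
      rw [pref_eq]
      have : g i + k - 1 = h i + k := by rw [hh]; ring
      rw [this]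
      constructor <;> intro <;> omega
    rw [hfilter]
    have := KalikowAux.card_filter_val_le h k (t := j - 1) (by omega)
    rw [this]
    have hj : ((j - 1 : ℕ) : ℤ) + 1 = (j : ℤ) := by omega
    rw [show (j - 1) + 1 = j from by omega, hj]
  -- equivalence between primality and goodness
  have key : ∀ k : ZMod (m + 1),
      IsPrimeParkingFunction (m + 2) (fun i => prefOfZMod (m + 2) (g i + k))
        ↔ KalikowAux.GoodAt m h ((-k).val) := by
    intro k
    constructor
    · rintro ⟨-, hcnt⟩ u hu1 hu2
      have hc := hcnt u hu1 (by omega)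
      have hcard := cardfact k u hu1 hu2
      have : ((u : ℕ) + 1 : ℤ) ≤ ((Finset.univ.filter (fun i : Fin (m + 2) =>
          prefOfZMod (m + 2) (g i + k) ≤ u)).card : ℤ) := by exact_mod_cast hc
      omega
    · intro hgood
      have hcnt : ∀ j : ℕ, 1 ≤ j → j ≤ (m + 2) - 1 →
          j + 1 ≤ (Finset.univ.filter (fun i : Fin (m + 2) =>
            prefOfZMod (m + 2) (g i + k) ≤ j)).card := by
        intro j hj1 hj2
        have hj2' : j ≤ m + 1 := by omega
        have hcard := cardfact k j hj1 hj2'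
        have hP : KalikowAux.Pfun m h ((-k).val) < KalikowAux.Pfun m h ((-k).val + j) := hgood j hj1 hj2'
        have : ((j : ℕ) + 1 : ℤ) ≤ ((Finset.univ.filter (fun i : Fin (m + 2) =>
            prefOfZMod (m + 2) (g i + k) ≤ j)).card : ℤ) := by omega
        exact_mod_cast this
      refine ⟨?_, hcnt⟩
      apply isParkingFunction_of_counting
      · intro i
        rw [pref_eq]; omega
      · intro i
        rw [pref_eq]
        have := ZMod.val_lt (g i + k - 1)
        omega
      · exact hcnt
  -- unique good k
  obtain ⟨x₀, hx₀le, hx₀good⟩ := KalikowAux.exists_goodAt h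
  set k₀ : ZMod (m + 1) := -((x₀ : ℕ) : ZMod (m + 1)) with hk₀
  have hk₀x : (-k₀).val = x₀ := by
    rw [hk₀, neg_neg, ZMod.val_cast_of_lt (by omega)]
  have hk₀good : KalikowAux.GoodAt m h ((-k₀).val) := by rw [hk₀x]; exact hx₀good
  have kuniq : ∀ k : ZMod (m + 1), KalikowAux.GoodAt m h ((-k).val) → k = k₀ := by
    intro k hk
    have hval : (-k).val ≤ m := by have := ZMod.val_lt (-k); omega
    have heq : (-k).val = x₀ := KalikowAux.goodAt_unique h hval hx₀le hk hx₀good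
    have : -k = -k₀ := by
      rw [← KalikowAux.cast_val_eq (-k), heq, hk₀, neg_neg]
    exact neg_injective this
  -- assemble
  refine ⟨fun i => g i + k₀, ⟨?_, ?_⟩, ?_⟩
  · rw [AddSubgroup.mem_zmultiples_iff]
    refine ⟨(k₀.val : ℤ), ?_⟩
    funext i
    simp only [Pi.smul_apply, Pi.sub_apply, zsmul_eq_mul, mul_one]
    push_cast
    rw [KalikowAux.cast_val_eq]
    ring
  · exact (key k₀).mpr hk₀good
  · rintro c ⟨hmem, hprime⟩
    rw [AddSubgroup.mem_zmultiples_iff] at hmem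
    obtain ⟨z, hz⟩ := hmem
    set k : ZMod (m + 1) := ((z : ℤ) : ZMod (m + 1)) with hkdef
    have hc : ∀ i, c i = g i + k := by
      intro i
      have := congrFun hz i
      simp only [Pi.smul_apply, Pi.sub_apply, zsmul_eq_mul, mul_one] at this
      rw [hkdef]
      linear_combination -this
    have hrw : (fun i : Fin (m + 2) => prefOfZMod (m + 2) (c i))
        = fun i => prefOfZMod (m + 2) (g i + k) := by
      funext i; rw [hc i]
    rw [hrw] at hprime
    have hk : k = k₀ := kuniq k ((key k).mp hprime)
    funext i
    rw [hc i, hk]
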